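/- The region enclosed by the curve r(θ) = cosⁿ(π/n) secⁿ((θ−π)/n) (θ ∈ [0,2π]) is contained in the rectangle [−cosⁿ(π/n), 1] × [−τₙ, τₙ], where τₙ = cosⁿ(π/n) sec^{n−1}(π/(2(n−1))). -/

import Mathlib

open Real

lemma key_jensen (m : ℕ) (x y φ : ℝ) (hx : |x| < π/2) (hy : |y| ≤ π/2) (hφ : |φ| < π/2)
    (h : m*x + y = (m+1)*φ) : Real.cos x ^ m * Real.cos y ≤ Real.cos φ ^ (m+1) := by
  obtain ⟨hx1, hx2⟩ := abs_lt.1 hx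
  obtain ⟨hy1, hy2⟩ := abs_le.1 hy
  obtain ⟨hφ1, hφ2⟩ := abs_lt.1 hφ
  have hcx : 0 < cos x := cos_pos_of_mem_Ioo ⟨by linarith, hx2⟩
  have hcφ : 0 < cos φ := cos_pos_of_mem_Ioo ⟨by linarith, hφ2⟩
  rcases le_or_gt (cos y) 0 with hcy | hcy
  · have : cos x ^ m * cos y ≤ 0 := mul_nonpos_of_nonneg_of_nonpos (by positivity) hcy
    exact this.trans (by positivity)
  · set a : ℝ := m / (m+1) with ha_def
    set b : ℝ := 1 / (m+1) with hb_def
    have hm1 : (0:ℝ) < (m:ℝ) + 1 := by positivity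
    have ha : 0 ≤ a := by positivity
    have hb : 0 ≤ b := by positivity
    have hab : a + b = 1 := by rw [ha_def, hb_def]; field_simp
    have hphi : a * x + b * y = φ := by
      rw [ha_def, hb_def]
      field_simp
      linarith [h]
    have h1 : a * cos x + b * cos y ≤ cos φ := by
      have := strictConcaveOn_cos_Icc.concaveOn.2 (x := x) (y := y)
        ⟨by linarith, by linarith⟩ ⟨hy1, hy2⟩ ha hb hab
      simpa [smul_eq_mul, hphi] using this
    have hJ : a * log (cos x) + b * log (cos y) ≤ log (a * cos x + b * cos y) := by
      have := strictConcaveOn_log_Ioi.concaveOn.2 (x := cos x) (y := cos y)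
        hcx hcy ha hb hab
      simpa [smul_eq_mul] using this
    have h3 : log (a * cos x + b * cos y) ≤ log (cos φ) :=
      Real.log_le_log (by positivity) h1
    have h2 : (m:ℝ) * log (cos x) + log (cos y) ≤ ((m:ℝ)+1) * log (cos φ) := by
      have h4 : a * log (cos x) + b * log (cos y) ≤ log (cos φ) := hJ.trans h3
      have := mul_le_mul_of_nonneg_left h4 hm1.le
      calc (m:ℝ) * log (cos x) + log (cos y)
          = ((m:ℝ)+1) * (a * log (cos x) + b * log (cos y)) := by
            rw [ha_def, hb_def]; field_simp
        _ ≤ ((m:ℝ)+1) * log (cos φ) := this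
    calc cos x ^ m * cos y = exp ((m:ℝ) * log (cos x) + log (cos y)) := by
          rw [exp_add, exp_log hcy, ← Real.log_pow, exp_log (by positivity)]
      _ ≤ exp (((m:ℝ)+1) * log (cos φ)) := exp_le_exp.2 h2
      _ = cos φ ^ (m+1) := by
          rw [show ((m:ℝ)+1) = ((m+1 : ℕ):ℝ) by push_cast; ring,
            ← Real.log_pow, exp_log (by positivity)]

theorem stmt_16 (n : ℕ) (hn : 3 ≤ n) :
    let τ : ℝ := Real.cos (π / n) ^ n * ((Real.cos (π / (2 * ((n : ℝ) - 1))))⁻¹) ^ (n - 1)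
    ∀ z : ℂ, (∃ r θ : ℝ, 0 ≤ r ∧
        r ≤ Real.cos (π / n) ^ n * ((Real.cos ((θ - π) / n))⁻¹) ^ n ∧
        θ ∈ Set.Ico 0 (2 * π) ∧ z = (r : ℂ) * Complex.exp (θ * Complex.I)) →
      z.re ∈ Set.Icc (-(Real.cos (π / n) ^ n)) 1 ∧ z.im ∈ Set.Icc (-τ) τ := by
  intro τ z ⟨r, θ, hr0, hrle, ⟨hθ0, hθ2⟩, hz⟩
  have hπ := pi_pos
  have hn3 : (3:ℝ) ≤ (n:ℝ) := by exact_mod_cast hn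
  have hnpos : (0:ℝ) < (n:ℝ) := by linarith
  set φ : ℝ := (θ - π) / n with hφdef
  set c : ℝ := Real.cos (π / n) ^ n with hcdef
  -- basic bounds on φ
  have hθπ : |θ - π| ≤ π := by rw [abs_le]; constructor <;> linarith
  have hφabs : |φ| ≤ π / n := by
    rw [hφdef, abs_div, abs_of_pos hnpos]
    exact (div_le_div_iff_of_pos_right hnpos).2 hθπ
  have hπnpos : (0:ℝ) < π / n := by positivity
  have hπn2 : π / n < π / 2 := by
    apply div_lt_div_of_pos_left hπ (by norm_num) (by linarith)
  have hφ2 : |φ| < π / 2 := lt_of_le_of_lt hφabs hπn2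
  have hπnπ : π / n ≤ π := by
    rw [div_le_iff₀ hnpos]; nlinarith
  have hcpn : 0 < Real.cos (π / n) := cos_pos_of_mem_Ioo ⟨by linarith, hπn2⟩
  have hc : 0 < c := by rw [hcdef]; positivity
  have hcosφ : Real.cos (π / n) ≤ Real.cos φ := by
    rw [← Real.cos_abs φ]
    exact Real.cos_le_cos_of_nonneg_of_le_pi (abs_nonneg φ) hπnπ hφabs
  have hcφ : 0 < Real.cos φ := lt_of_lt_of_le hcpn hcosφ
  -- θ in terms of φ
  have hθeq : θ = π + n * φ := by
    rw [hφdef]; field_simp; ring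
  have hcosθ : Real.cos θ = -Real.cos (n * φ) := by
    rw [hθeq, Real.cos_add]; simp
  have hsinθ : Real.sin θ = -Real.sin (n * φ) := by
    rw [hθeq, Real.sin_add]; simp
  -- re and im of z
  have hre : z.re = r * Real.cos θ := by
    rw [hz]; simp [Complex.mul_re, Complex.exp_ofReal_mul_I_re, Complex.exp_ofReal_mul_I_im]
  have him : z.im = r * Real.sin θ := by
    rw [hz]; simp [Complex.mul_im, Complex.exp_ofReal_mul_I_re, Complex.exp_ofReal_mul_I_im]
  have hrle' : r ≤ c * (Real.cos φ)⁻¹ ^ n := hrle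
  -- r ≤ 1
  have hr1 : r ≤ 1 := by
    have h1 : (Real.cos φ)⁻¹ ≤ (Real.cos (π / n))⁻¹ := by
      exact inv_anti₀ hcpn hcosφ
    have h2 : (Real.cos φ)⁻¹ ^ n ≤ (Real.cos (π / n))⁻¹ ^ n :=
      pow_le_pow_left₀ (by positivity) h1 n
    calc r ≤ c * (Real.cos φ)⁻¹ ^ n := hrle'
      _ ≤ c * (Real.cos (π / n))⁻¹ ^ n := by
          exact mul_le_mul_of_nonneg_left h2 hc.le
      _ = 1 := by
          rw [hcdef, ← mul_pow, mul_inv_cancel₀ hcpn.ne', one_pow]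
  -- cast facts for m = n - 1
  have hmcast : ((n - 1 : ℕ) : ℝ) = (n : ℝ) - 1 := by
    have : (1:ℕ) ≤ n := by omega
    push_cast [Nat.cast_sub this]
    ring
  have hmsucc : (n - 1) + 1 = n := by omega
  have hnφπ : (n:ℝ) * |φ| ≤ π := by
    calc (n:ℝ) * |φ| ≤ (n:ℝ) * (π / n) := by
          exact mul_le_mul_of_nonneg_left hφabs hnpos.le
      _ = π := by field_simp
  have habsnφ : |(n:ℝ) * φ| = (n:ℝ) * |φ| := by
    rw [abs_mul, abs_of_pos hnpos]
  -- KEY 1 : cos (nφ) ≤ cos φ ^ n  (when cos(nφ) > 0)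
  -- Re bounds
  constructor
  · constructor
    · -- lower bound: -c ≤ z.re
      rw [hre, hcosθ]
      have goal1 : r * Real.cos (n * φ) ≤ c := by
        rcases le_or_gt (Real.cos ((n:ℝ) * φ)) 0 with hcn | hcn
        · have : r * Real.cos ((n:ℝ) * φ) ≤ 0 := mul_nonpos_of_nonneg_of_nonpos hr0 hcn
          linarith
        · -- cos(nφ) > 0 hence |nφ| < π/2
          have habs : |(n:ℝ) * φ| < π / 2 := by
            by_contra hcon
            push_neg at hcon
            have h0 : Real.cos |(n:ℝ) * φ| ≤ 0 := by
              apply Real.cos_nonpos_of_pi_div_two_le_of_le hcon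
              rw [habsnφ]; linarith
            rw [Real.cos_abs] at h0
            linarith
          have hk := key_jensen (n - 1) 0 ((n:ℝ) * |φ|) |φ| (by rw [abs_zero]; linarith)
            (by rw [abs_of_nonneg (by positivity : (0:ℝ) ≤ (n:ℝ) * |φ|), ← habsnφ]
                exact le_of_lt habs)
            (by rwa [abs_abs])
            (by rw [hmcast]; ring)
          rw [Real.cos_zero, one_pow, one_mul, hmsucc, ← habsnφ, Real.cos_abs, Real.cos_abs] at hk
          -- hk : cos (n * φ) ≤ cos φ ^ n
          calc r * Real.cos ((n:ℝ) * φ)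
              ≤ (c * (Real.cos φ)⁻¹ ^ n) * Real.cos ((n:ℝ) * φ) := by
                exact mul_le_mul_of_nonneg_right hrle' hcn.le
            _ ≤ (c * (Real.cos φ)⁻¹ ^ n) * (Real.cos φ ^ n) := by
                apply mul_le_mul_of_nonneg_left hk (by positivity)
            _ = c := by
                rw [inv_pow, mul_assoc, inv_mul_cancel₀ (by positivity), mul_one]
      rw [mul_neg]
      linarith
    · -- upper bound: z.re ≤ 1
      rw [hre]
      calc r * Real.cos θ ≤ r * 1 := mul_le_mul_of_nonneg_left (Real.cos_le_one θ) hr0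
        _ = r := mul_one r
        _ ≤ 1 := hr1
  · -- Im bounds
    set β : ℝ := π / (2 * ((n:ℝ) - 1)) with hβdef
    have hn1pos : (0:ℝ) < (n:ℝ) - 1 := by linarith
    have hβpos : 0 < β := by rw [hβdef]; positivity
    have hβlt : β < π / 2 := by
      rw [hβdef]
      apply div_lt_div_of_pos_left hπ (by norm_num) (by linarith)
    have hcβ : 0 < Real.cos β := cos_pos_of_mem_Ioo ⟨by linarith, hβlt⟩
    have hτeq : τ = c * (Real.cos β)⁻¹ ^ (n - 1) := rfl
    have hτpos : 0 < τ := by rw [hτeq]; positivity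
    have key : |z.im| ≤ τ := by
      rw [him, abs_mul, abs_of_nonneg hr0, hsinθ, abs_neg]
      have hsin_eq : |Real.sin ((n:ℝ) * φ)| = Real.sin ((n:ℝ) * |φ|) := by
        have hnn : 0 ≤ Real.sin ((n:ℝ) * |φ|) :=
          Real.sin_nonneg_of_nonneg_of_le_pi (by positivity) hnφπ
        rcases abs_cases φ with ⟨h1, _⟩ | ⟨h1, _⟩
        · rw [h1] at hnn ⊢; exact abs_of_nonneg hnn
        · rw [h1, mul_neg, Real.sin_neg] at hnn ⊢
          exact abs_of_nonpos (by linarith)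
      rw [hsin_eq]
      have hk := key_jensen (n - 1) β ((n:ℝ) * |φ| - π/2) |φ|
        (by rw [abs_of_pos hβpos]; exact hβlt)
        (by rw [abs_le]; constructor <;> [linarith [mul_nonneg hnpos.le (abs_nonneg φ)]; linarith])
        (by rwa [abs_abs])
        (by rw [hmcast, hβdef]; field_simp; ring)
      rw [hmsucc] at hk
      have hcossin : Real.cos ((n:ℝ) * |φ| - π/2) = Real.sin ((n:ℝ) * |φ|) := by
        rw [← Real.cos_neg, neg_sub, Real.cos_pi_div_two_sub]
      rw [hcossin, Real.cos_abs] at hk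
      -- hk : cos β ^ (n-1) * sin (n|φ|) ≤ cos φ ^ n
      have hsle : Real.sin ((n:ℝ) * |φ|) ≤ Real.cos φ ^ n * (Real.cos β)⁻¹ ^ (n - 1) := by
        rw [inv_pow, ← div_eq_mul_inv, le_div_iff₀ (by positivity)]
        linarith [hk]
      calc r * Real.sin ((n:ℝ) * |φ|)
          ≤ (c * (Real.cos φ)⁻¹ ^ n) * Real.sin ((n:ℝ) * |φ|) := by
            apply mul_le_mul_of_nonneg_right hrle'
            exact Real.sin_nonneg_of_nonneg_of_le_pi (by positivity) hnφπ
        _ ≤ (c * (Real.cos φ)⁻¹ ^ n) * (Real.cos φ ^ n * (Real.cos β)⁻¹ ^ (n - 1)) := by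
            apply mul_le_mul_of_nonneg_left hsle (by positivity)
        _ = τ := by
            rw [hτeq, inv_pow]
            field_simp
    exact ⟨neg_le_of_abs_le key, le_of_abs_le key⟩
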